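/- For c > 0, λ > 0, the function p(x,t) = (λ/(2c)) · I₀((λ/c)√(c²t² - x²)) / sinh(λt) satisfies the telegraph-type equation ∂²p/∂t² + 2λ·coth(λt)·∂p/∂t = c²∂²p/∂x² on {(x,t): t>0, |x|<ct}, and ∫_{-ct}^{ct} p(x,t) dx = 1. -/

import Mathlib

open Real MeasureTheory Topology Filter
set_option maxHeartbeats 1000000

/-- Modified Bessel function of the first kind of order 0. -/
noncomputable def besselI0 (z : ℝ) : ℝ :=
  ∑' k : ℕ, (z / 2) ^ (2 * k) / ((Nat.factorial k : ℝ)) ^ 2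

namespace CothTele



/-- Entire-type coefficient growth: the series converges absolutely at every radius. -/
def Ent (d : ℕ → ℝ) : Prop := ∀ r : ℝ, 0 ≤ r → Summable fun k => |d k| * r ^ k

lemma nat_le_two_pow (k : ℕ) : ((k : ℝ) + 1) ≤ 2 ^ k := by
  have h := Nat.lt_two_pow_self (n := k)
  have : ((k + 1 : ℕ) : ℝ) ≤ ((2 ^ k : ℕ) : ℝ) := by exact_mod_cast h
  simpa [Nat.cast_pow] using this

lemma ent_shift {d : ℕ → ℝ} (hd : Ent d) : Ent (fun k => ((k : ℝ) + 1) * d (k + 1)) := by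
  intro r hr
  have h2 : Summable fun k : ℕ => |d (k + 1)| * (2 * (r + 1)) ^ (k + 1) :=
    (summable_nat_add_iff 1).2 (hd (2 * (r + 1)) (by linarith))
  refine Summable.of_nonneg_of_le (fun k => by positivity) (fun k => ?_) h2
  have h1 : ((k : ℝ) + 1) * r ^ k ≤ 2 ^ (k + 1) * (r + 1) ^ (k + 1) := by
    refine mul_le_mul ?_ ?_ (by positivity) (by positivity)
    · exact (nat_le_two_pow k).trans (pow_le_pow_right₀ one_le_two (Nat.le_succ k))
    · exact (pow_le_pow_left₀ hr (by linarith) k).trans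
        (pow_le_pow_right₀ (by linarith) (Nat.le_succ k))
  calc |((k : ℝ) + 1) * d (k + 1)| * r ^ k = |d (k + 1)| * (((k:ℝ) + 1) * r ^ k) := by
        rw [abs_mul, abs_of_nonneg (by positivity : (0:ℝ) ≤ (k:ℝ)+1)]; ring
    _ ≤ |d (k + 1)| * (2 ^ (k+1) * (r + 1) ^ (k+1)) :=
        mul_le_mul_of_nonneg_left h1 (abs_nonneg _)
    _ = |d (k + 1)| * (2 * (r + 1)) ^ (k + 1) := by rw [mul_pow]

/-- the power series with coefficients `d`. -/
noncomputable def PS (d : ℕ → ℝ) (u : ℝ) : ℝ := ∑' k : ℕ, d k * u ^ k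

/-- derivative coefficients -/
noncomputable def D (d : ℕ → ℝ) : ℕ → ℝ := fun k => ((k : ℝ) + 1) * d (k + 1)

/-- coefficients of the Bessel-type series. -/
noncomputable def dc (a : ℝ) : ℕ → ℝ := fun k => a ^ k / (Nat.factorial k : ℝ) ^ 2

lemma summable_PS {d : ℕ → ℝ} (hd : Ent d) (u : ℝ) : Summable fun k => d k * u ^ k := by
  refine Summable.of_norm ?_
  refine Summable.of_nonneg_of_le (fun k => norm_nonneg _) (fun k => ?_) (hd (|u|) (abs_nonneg u))
  rw [Real.norm_eq_abs, abs_mul, abs_pow]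

lemma deriv_term_bound {d : ℕ → ℝ} {R : ℝ} (hR1 : 1 ≤ R) (k : ℕ) (y : ℝ) (hyR : |y| ≤ R) :
    |d k * ((k:ℝ) * y ^ (k - 1))| ≤ ((k : ℝ) + 1) * |d k| * R ^ k := by
  rcases Nat.eq_zero_or_pos k with hk | hk
  · subst hk; simp
  · have h1 : |y| ^ (k - 1) ≤ R ^ k :=
      (pow_le_pow_left₀ (abs_nonneg y) hyR _).trans (pow_le_pow_right₀ hR1 (Nat.sub_le k 1))
    calc |d k * ((k:ℝ) * y ^ (k-1))| = |d k| * ((k:ℝ) * |y| ^ (k-1)) := by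
          rw [abs_mul, abs_mul, Nat.abs_cast, abs_pow]
      _ ≤ |d k| * (((k:ℝ) + 1) * R ^ k) := by
          refine mul_le_mul_of_nonneg_left ?_ (abs_nonneg _)
          exact mul_le_mul (by linarith) h1 (by positivity) (by positivity)
      _ = ((k : ℝ) + 1) * |d k| * R ^ k := by ring

lemma hasDerivAt_PS {d : ℕ → ℝ} (hd : Ent d) (u : ℝ) :
    HasDerivAt (PS d) (PS (D d) u) u := by
  set R : ℝ := |u| + 1 with hR
  have hR1 : (1:ℝ) ≤ R := by have := abs_nonneg u; simp only [hR]; linarith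
  have hRpos : (0:ℝ) < R := by linarith
  have hbd : Summable fun k : ℕ => ((k : ℝ) + 1) * |d k| * R ^ k := by
    have h2 : Summable fun k : ℕ => |d k| * (2 * R) ^ k := hd (2 * R) (by linarith)
    refine Summable.of_nonneg_of_le (fun k => by positivity) (fun k => ?_) h2
    calc ((k : ℝ) + 1) * |d k| * R ^ k ≤ 2 ^ k * |d k| * R ^ k := by
          refine mul_le_mul_of_nonneg_right (mul_le_mul_of_nonneg_right
            (nat_le_two_pow k) (abs_nonneg _)) (by positivity)
      _ = |d k| * (2 * R) ^ k := by rw [mul_pow]; ring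
  have hderiv : HasDerivAt (PS d) (∑' k : ℕ, d k * ((k : ℝ) * u ^ (k - 1))) u := by
    refine hasDerivAt_tsum_of_isPreconnected hbd (Metric.isOpen_ball)
      ((convex_ball (0:ℝ) R).isPreconnected) (t := Metric.ball (0:ℝ) R)
      (g := fun k y => d k * y ^ k) (g' := fun k y => d k * ((k:ℝ) * y ^ (k-1)))
      (fun k y _ => (hasDerivAt_pow k y).const_mul (d k)) (fun k y hy => ?_)
      (Metric.mem_ball_self hRpos) ?_ ?_
    · have hyR : |y| < R := by simpa [Real.dist_eq] using hy
      rw [Real.norm_eq_abs]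
      exact deriv_term_bound hR1 k y hyR.le
    · refine Summable.of_norm ?_
      refine Summable.of_nonneg_of_le (fun k => norm_nonneg _) (fun k => ?_) (hd 1 zero_le_one)
      rw [Real.norm_eq_abs, abs_mul, abs_pow, abs_zero, one_pow]
      rcases Nat.eq_zero_or_pos k with hk | hk
      · subst hk; simp
      · rw [zero_pow (by omega)]; simp [abs_nonneg]
    · simpa [Real.dist_eq] using (by linarith [abs_nonneg u] : |u| < R)
  have heq : (∑' k : ℕ, d k * ((k : ℝ) * u ^ (k - 1))) = PS (D d) u := by
    have hsum : Summable fun k : ℕ => d k * ((k : ℝ) * u ^ (k - 1)) := by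
      refine Summable.of_norm ?_
      refine Summable.of_nonneg_of_le (fun k => norm_nonneg _) (fun k => ?_) hbd
      rw [Real.norm_eq_abs]
      exact deriv_term_bound hR1 k u (by simp only [hR]; linarith)
    rw [Summable.tsum_eq_zero_add hsum]
    simp only [Nat.cast_zero, PS, D]
    rw [show (d 0 * ((0:ℝ) * u ^ (0 - 1))) = 0 by ring, zero_add]
    congr 1; funext k
    simp only [Nat.add_sub_cancel]
    push_cast
    ring
  rw [← heq]; exact hderiv



/-- coefficients of `F(u) = I₀(2√(au))`. -/

lemma dc_nonneg {a : ℝ} (ha : 0 ≤ a) (k : ℕ) : 0 ≤ dc a k := by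
  unfold dc; positivity

lemma ent_dc {a : ℝ} (ha : 0 ≤ a) : Ent (dc a) := by
  intro r hr
  refine Summable.of_nonneg_of_le (fun k => by positivity) (fun k => ?_)
    (Real.summable_pow_div_factorial (a * r))
  have h1 : (1:ℝ) ≤ (Nat.factorial k : ℝ) := by exact_mod_cast Nat.one_le_iff_ne_zero.2 (Nat.factorial_ne_zero k)
  have h2 : (Nat.factorial k : ℝ) ≤ (Nat.factorial k : ℝ) ^ 2 := by nlinarith
  have h3 : |dc a k| * r ^ k = (a * r) ^ k / (Nat.factorial k : ℝ) ^ 2 := by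
    rw [abs_of_nonneg (dc_nonneg ha k)]
    unfold dc; rw [mul_pow]; ring
  rw [h3]
  exact div_le_div_of_nonneg_left (by positivity) (by positivity) h2

lemma summable_mul_PS {d : ℕ → ℝ} (hd : Ent d) (u : ℝ) :
    Summable fun j : ℕ => (j : ℝ) * d j * u ^ j := by
  refine Summable.of_norm ?_
  have h2 : Summable fun k : ℕ => |d k| * (2 * |u|) ^ k := hd (2 * |u|) (by positivity)
  refine Summable.of_nonneg_of_le (fun k => norm_nonneg _) (fun k => ?_) h2
  rw [Real.norm_eq_abs, abs_mul, abs_mul, Nat.abs_cast, abs_pow, mul_pow]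
  calc (k:ℝ) * |d k| * |u| ^ k ≤ 2 ^ k * |d k| * |u| ^ k := by
        refine mul_le_mul_of_nonneg_right (mul_le_mul_of_nonneg_right ?_ (abs_nonneg _)) (by positivity)
        linarith [nat_le_two_pow k]
    _ = |d k| * (2 ^ k * |u| ^ k) := by ring

lemma ode_dc {a : ℝ} (ha : 0 ≤ a) (u : ℝ) :
    u * PS (D (D (dc a))) u + PS (D (dc a)) u = a * PS (dc a) u := by
  set e := D (dc a) with he_def
  have he : Ent e := ent_shift (ent_dc ha)
  have hsum_e : Summable fun k => e k * u ^ k := summable_PS he u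
  have hsum_h : Summable fun j : ℕ => (j : ℝ) * e j * u ^ j := summable_mul_PS he u
  have h1 : u * PS (D e) u = ∑' j : ℕ, (j : ℝ) * e j * u ^ j := by
    rw [PS, ← tsum_mul_left, Summable.tsum_eq_zero_add hsum_h]
    rw [show ((0:ℕ):ℝ) * e 0 * u ^ 0 = 0 by simp, zero_add]
    congr 1; funext k
    show u * (D e k * u ^ k) = ((k+1 : ℕ) : ℝ) * e (k+1) * u ^ (k+1)
    simp only [D]; push_cast; ring
  have h2 : PS e u + ∑' j : ℕ, (j : ℝ) * e j * u ^ j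
      = ∑' j : ℕ, ((j : ℝ) + 1) * e j * u ^ j := by
    rw [PS, ← Summable.tsum_add hsum_e hsum_h]
    congr 1; funext j; ring
  have h3 : ∀ j : ℕ, ((j : ℝ) + 1) * e j = a * dc a j := by
    intro j
    have hfact : ((Nat.factorial j : ℝ)) ≠ 0 := by
      exact_mod_cast Nat.factorial_ne_zero j
    have hj1 : ((j : ℝ) + 1) ≠ 0 := by positivity
    simp only [he_def, D, dc, Nat.factorial_succ, pow_succ]
    push_cast
    field_simp
  rw [h1, add_comm, h2]
  calc ∑' j : ℕ, ((j : ℝ) + 1) * e j * u ^ j = ∑' j : ℕ, a * (dc a j * u ^ j) := by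
        congr 1; funext j; rw [h3 j]; ring
    _ = a * PS (dc a) u := by rw [tsum_mul_left]; rfl


noncomputable def J (k : ℕ) : ℝ := ∫ y in (-1:ℝ)..1, (1 - y^2)^k

lemma J_zero : J 0 = 2 := by simp [J]; norm_num

lemma J_rec (k : ℕ) : (2*(k:ℝ)+3) * J (k+1) = (2*(k:ℝ)+2) * J k := by
  have hderiv : ∀ y : ℝ, HasDerivAt (fun y : ℝ => y * (1 - y^2)^(k+1))
      ((2*(k:ℝ)+3) * (1 - y^2)^(k+1) - (2*(k:ℝ)+2) * (1 - y^2)^k) y := by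
    intro y
    have h1 : HasDerivAt (fun y : ℝ => 1 - y^2) (-(2*y)) y := by
      simpa using ((hasDerivAt_pow 2 y).const_sub 1)
    have h2 : HasDerivAt (fun y : ℝ => (1 - y^2)^(k+1))
        (((k:ℝ)+1) * (1 - y^2)^k * (-(2*y))) y := by
      have := (hasDerivAt_pow (k+1) (1 - y^2)).comp y h1
      simpa [Nat.add_sub_cancel, Function.comp_def] using this
    have h3 := (hasDerivAt_id y).mul h2
    refine h3.congr_deriv ?_
    simp only [id_eq]
    rw [pow_succ]
    push_cast
    ring
  have hcont : Continuous fun y : ℝ =>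
      (2*(k:ℝ)+3) * (1 - y^2)^(k+1) - (2*(k:ℝ)+2) * (1 - y^2)^k := by continuity
  have hint := intervalIntegral.integral_eq_sub_of_hasDerivAt
    (f := fun y : ℝ => y * (1 - y^2)^(k+1)) (a := (-1:ℝ)) (b := 1)
    (fun y _ => hderiv y) (hcont.intervalIntegrable _ _)
  have hval : (fun y : ℝ => y * (1 - y^2)^(k+1)) 1 - (fun y : ℝ => y * (1 - y^2)^(k+1)) (-1) = 0 := by
    norm_num
  rw [hval] at hint
  have hsplit : ∫ y in (-1:ℝ)..1,
      ((2*(k:ℝ)+3) * (1 - y^2)^(k+1) - (2*(k:ℝ)+2) * (1 - y^2)^k)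
      = (2*(k:ℝ)+3) * J (k+1) - (2*(k:ℝ)+2) * J k := by
    rw [intervalIntegral.integral_sub, intervalIntegral.integral_const_mul,
      intervalIntegral.integral_const_mul]
    · rfl
    · exact (by continuity : Continuous fun y : ℝ => (2*(k:ℝ)+3) * (1 - y^2)^(k+1)).intervalIntegrable _ _
    · exact (by continuity : Continuous fun y : ℝ => (2*(k:ℝ)+2) * (1 - y^2)^k).intervalIntegrable _ _
  rw [hsplit] at hint
  linarith

lemma J_eq (k : ℕ) : J k = 2^(2*k+1) * ((Nat.factorial k : ℝ))^2 / (Nat.factorial (2*k+1) : ℝ) := by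
  induction k with
  | zero => simp [J_zero]
  | succ k ih =>
    have hrec := J_rec k
    rw [ih] at hrec
    have h3 : (2*(k:ℝ)+3) ≠ 0 := by positivity
    have hfact : ((Nat.factorial (2*k+1) : ℝ)) ≠ 0 := by exact_mod_cast Nat.factorial_ne_zero _
    have hfs : (Nat.factorial (2*(k+1)+1) : ℝ) = (2*(k:ℝ)+3) * ((2*(k:ℝ)+2) * (Nat.factorial (2*k+1) : ℝ)) := by
      have : 2*(k+1)+1 = (2*k+1) + 1 + 1 := by ring
      rw [this, Nat.factorial_succ, Nat.factorial_succ]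
      push_cast
      ring
    have hJ : J (k+1) = (2*(k:ℝ)+2) * (2^(2*k+1) * ((Nat.factorial k : ℝ))^2 / (Nat.factorial (2*k+1) : ℝ)) / (2*(k:ℝ)+3) := by
      field_simp at hrec ⊢
      linarith
    have hks : ((Nat.factorial (k+1) : ℝ)) = ((k:ℝ)+1) * (Nat.factorial k : ℝ) := by
      rw [Nat.factorial_succ]; push_cast; ring
    have hexp : (2:ℝ)^(2*(k+1)+1) = 2^(2*k+1) * 4 := by
      rw [show 2*(k+1)+1 = (2*k+1)+2 by ring, pow_add]; norm_num
    rw [hJ, hfs, hks, hexp]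
    have hfk : ((Nat.factorial k : ℝ)) ≠ 0 := by exact_mod_cast Nat.factorial_ne_zero _
    field_simp
    ring

lemma integral_poly (c t : ℝ) (hc : 0 < c) (ht : 0 < t) (k : ℕ) :
    ∫ x in Set.Ioo (-(c*t)) (c*t), (c^2*t^2 - x^2)^k = (c*t)^(2*k+1) * J k := by
  have hct : (0:ℝ) < c * t := mul_pos hc ht
  have hle : -(c*t) ≤ c*t := by linarith
  rw [← MeasureTheory.integral_Ioc_eq_integral_Ioo,
      ← intervalIntegral.integral_of_le hle]
  have hsub : ∀ x : ℝ, (c^2*t^2 - x^2)^k = (fun y => (c*t)^(2*k) * (1 - y^2)^k) (x / (c*t)) := by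
    intro x
    simp only
    rw [pow_mul, ← mul_pow]
    congr 1
    field_simp
    rw [← mul_pow _ _ k]
    congr 1
    rw [mul_div_assoc']
    exact (mul_div_cancel_left₀ _ (by positivity)).symm
  calc ∫ x in (-(c*t))..(c*t), (c^2*t^2 - x^2)^k
      = ∫ x in (-(c*t))..(c*t), (fun y => (c*t)^(2*k) * (1 - y^2)^k) (x / (c*t)) := by
        congr 1; funext x; exact hsub x
    _ = (c*t) • ∫ y in (-(c*t)/(c*t))..((c*t)/(c*t)), (c*t)^(2*k) * (1 - y^2)^k :=
        intervalIntegral.integral_comp_div (fun y => (c*t)^(2*k) * (1 - y^2)^k) (ne_of_gt hct)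
    _ = (c*t)^(2*k+1) * J k := by
        rw [div_self (ne_of_gt hct), neg_div, div_self (ne_of_gt hct),
          intervalIntegral.integral_const_mul]
        simp only [smul_eq_mul, J]
        rw [pow_succ]
        ring



lemma term_eq (c lam t : ℝ) (hc : 0 < c) (hlam : 0 < lam) (k : ℕ) :
    dc (lam^2/(4*c^2)) k * ((c*t)^(2*k+1) * J k)
      = (2*c/lam) * ((lam*t)^(2*k+1) / (Nat.factorial (2*k+1) : ℝ)) := by
  rw [J_eq]
  unfold dc
  have hfk : ((Nat.factorial k : ℝ)) ≠ 0 := by exact_mod_cast Nat.factorial_ne_zero _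
  have hf2k : ((Nat.factorial (2*k+1) : ℝ)) ≠ 0 := by exact_mod_cast Nat.factorial_ne_zero _
  have h4 : ((4:ℝ)*c^2)^k = 2^(2*k) * c^(2*k) := by
    rw [show ((4:ℝ)*c^2) = (2*c)^2 by ring, ← pow_mul, mul_pow]
  have hl : (lam^2)^k = lam^(2*k) := by rw [← pow_mul, Nat.mul_comm 2 k]
  rw [div_pow, h4, hl]
  rw [mul_pow c t, mul_pow lam t]
  rw [pow_succ (2:ℝ) (2*k), pow_succ c (2*k), pow_succ t (2*k), pow_succ lam (2*k)]
  field_simp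

lemma integral_PS (c lam t : ℝ) (hc : 0 < c) (hlam : 0 < lam) (ht : 0 < t) :
    ∫ x in Set.Ioo (-(c*t)) (c*t), PS (dc (lam^2/(4*c^2))) (c^2*t^2 - x^2)
      = (2*c/lam) * Real.sinh (lam*t) := by
  set a : ℝ := lam^2/(4*c^2) with ha_def
  have ha : 0 ≤ a := by positivity
  set F : ℕ → ℝ → ℝ := fun k x => dc a k * (c^2*t^2 - x^2)^k with hF_def
  have hFcont : ∀ k, Continuous (F k) := by
    intro k; simp only [hF_def]; continuity
  have hFint : ∀ k, Integrable (F k) (volume.restrict (Set.Ioo (-(c*t)) (c*t))) := by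
    intro k
    exact ((hFcont k).integrableOn_Icc).mono_set Set.Ioo_subset_Icc_self
  have hFI : ∀ k, ∫ x in Set.Ioo (-(c*t)) (c*t), F k x
      = (2*c/lam) * ((lam*t)^(2*k+1) / (Nat.factorial (2*k+1) : ℝ)) := by
    intro k
    simp only [hF_def]
    rw [MeasureTheory.integral_const_mul _ _, integral_poly c t hc ht k, ← mul_assoc]
    rw [← term_eq c lam t hc hlam k]
    ring
  have hsinh : Summable fun k : ℕ => (lam*t)^(2*k+1) / (Nat.factorial (2*k+1) : ℝ) :=
    (Real.hasSum_sinh (lam*t)).summable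
  have hnorm_sum : Summable fun k : ℕ => ∫ x in Set.Ioo (-(c*t)) (c*t), ‖F k x‖ := by
    have : ∀ k : ℕ, ∫ x in Set.Ioo (-(c*t)) (c*t), ‖F k x‖
        = ∫ x in Set.Ioo (-(c*t)) (c*t), F k x := by
      intro k
      refine MeasureTheory.setIntegral_congr_fun measurableSet_Ioo (fun x hx => ?_)
      rw [Real.norm_eq_abs, abs_of_nonneg]
      have hx1 : -(c*t) < x := hx.1
      have hx2 : x < c*t := hx.2
      have hnn : 0 ≤ c^2*t^2 - x^2 := by nlinarith
      simp only [hF_def]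
      have := dc_nonneg ha k
      positivity
    simp only [this, hFI]
    exact hsinh.mul_left _
  have hswap := MeasureTheory.integral_tsum_of_summable_integral_norm hFint hnorm_sum
  have lhs_eq : ∀ x : ℝ, PS (dc a) (c^2*t^2 - x^2) = ∑' k, F k x := by
    intro x; rfl
  calc ∫ x in Set.Ioo (-(c*t)) (c*t), PS (dc a) (c^2*t^2 - x^2)
      = ∫ x in Set.Ioo (-(c*t)) (c*t), ∑' k, F k x := by rfl
    _ = ∑' k, ∫ x in Set.Ioo (-(c*t)) (c*t), F k x := hswap.symm
    _ = ∑' k, (2*c/lam) * ((lam*t)^(2*k+1) / (Nat.factorial (2*k+1) : ℝ)) := by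
        simp only [hFI]
    _ = (2*c/lam) * Real.sinh (lam*t) := by
        rw [tsum_mul_left, (Real.hasSum_sinh (lam*t)).tsum_eq]





lemma besselI0_eq (c lam : ℝ) (hc : 0 < c) (u : ℝ) (hu : 0 ≤ u) :
    besselI0 (lam / c * Real.sqrt u) = PS (dc (lam^2/(4*c^2))) u := by
  unfold besselI0 PS dc
  congr 1; funext k
  have hc' : (c:ℝ) ≠ 0 := ne_of_gt hc
  have h1 : ((lam / c * Real.sqrt u) / 2)^(2*k) = (lam^2/(4*c^2))^k * u^k := by
    rw [pow_mul, ← mul_pow]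
    congr 1
    rw [div_pow, mul_pow, div_pow, Real.sq_sqrt hu]
    rw [div_mul_eq_mul_div, div_div, div_mul_eq_mul_div]
    ring
  rw [h1]; ring

lemma pde_pointwise (c lam : ℝ) (hc : 0 < c) (hlam : 0 < lam)
    (p : ℝ → ℝ → ℝ)
    (hp : ∀ x t, p x t =
      lam / (2 * c) * besselI0 (lam / c * Real.sqrt (c ^ 2 * t ^ 2 - x ^ 2))
        / Real.sinh (lam * t))
    (x t : ℝ) (ht : 0 < t) (hx : |x| < c * t) :
    deriv (fun r => deriv (fun r' => p x r') r) t
        + 2 * lam * (Real.cosh (lam * t) / Real.sinh (lam * t)) * deriv (fun r => p x r) t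
        = c ^ 2 * deriv (fun s => deriv (fun s' => p s' t) s) x := by
  set a : ℝ := lam^2/(4*c^2) with ha_def
  have ha : 0 ≤ a := by positivity
  set F : ℝ → ℝ := PS (dc a) with hF_def
  set F1 : ℝ → ℝ := PS (D (dc a)) with hF1_def
  set F2 : ℝ → ℝ := PS (D (D (dc a))) with hF2_def
  have hdF : ∀ u, HasDerivAt F (F1 u) u := hasDerivAt_PS (ent_dc ha)
  have hdF1 : ∀ u, HasDerivAt F1 (F2 u) u := hasDerivAt_PS (ent_shift (ent_dc ha))
  have hx2 : x^2 < c^2*t^2 := by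
    have h1 : |x|^2 < (c*t)^2 := by
      have := abs_nonneg x
      nlinarith
    rw [sq_abs] at h1; nlinarith
  -- representation of p on appropriate open sets
  have hrep : ∀ x' t' : ℝ, x'^2 ≤ c^2*t'^2 → p x' t'
      = lam/(2*c) * F (c^2*t'^2 - x'^2) / Real.sinh (lam*t') := by
    intro x' t' h
    rw [hp, CothTele.besselI0_eq c lam hc _ (by linarith)]
  -- the t-direction
  have hopen_t : IsOpen {r : ℝ | 0 < r ∧ x^2 < c^2*r^2} := by
    refine IsOpen.inter (isOpen_lt continuous_const continuous_id) ?_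
    exact isOpen_lt continuous_const (continuous_const.mul ((continuous_id.pow 2)))
  have hmem_t : t ∈ {r : ℝ | 0 < r ∧ x^2 < c^2*r^2} := ⟨ht, hx2⟩
  set g : ℝ → ℝ := fun r => lam/(2*c) * F (c^2*r^2 - x^2) / Real.sinh (lam*r) with hg_def
  have hev : (fun r => p x r) =ᶠ[𝓝 t] g := by
    filter_upwards [hopen_t.mem_nhds hmem_t] with r hr
    exact hrep x r (le_of_lt hr.2)
  set Pt : ℝ → ℝ := fun r => (lam/(2*c) * (F1 (c^2*r^2 - x^2) * (2*c^2*r)) * Real.sinh (lam*r)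
      - lam/(2*c) * F (c^2*r^2 - x^2) * (lam * Real.cosh (lam*r))) / (Real.sinh (lam*r))^2
    with hPt_def
  have hsinh_d : ∀ r : ℝ, HasDerivAt (fun r => Real.sinh (lam*r)) (lam * Real.cosh (lam*r)) r := by
    intro r
    have h := (Real.hasDerivAt_sinh (lam*r)).comp r ((hasDerivAt_id r).const_mul lam)
    simpa [mul_comm, Function.comp_def] using h
  have hU : ∀ r : ℝ, HasDerivAt (fun r => c^2*r^2 - x^2) (2*c^2*r) r := by
    intro r
    have h := ((hasDerivAt_pow 2 r).const_mul (c^2)).sub_const (x^2)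
    refine h.congr_deriv ?_
    push_cast; ring
  have hFU : ∀ r : ℝ, HasDerivAt (fun r => F (c^2*r^2 - x^2))
      (F1 (c^2*r^2 - x^2) * (2*c^2*r)) r := fun r => (hdF _).comp r (hU r)
  have hgd : ∀ r : ℝ, 0 < r → HasDerivAt g (Pt r) r := by
    intro r hr
    have hs : Real.sinh (lam*r) ≠ 0 := ne_of_gt (Real.sinh_pos_iff.2 (mul_pos hlam hr))
    have hN : HasDerivAt (fun r => lam/(2*c) * F (c^2*r^2 - x^2))
        (lam/(2*c) * (F1 (c^2*r^2 - x^2) * (2*c^2*r))) r := (hFU r).const_mul _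
    exact hN.div (hsinh_d r) hs
  have hder_ev : deriv (fun r' => p x r') =ᶠ[𝓝 t] Pt := by
    have h1 : deriv (fun r' => p x r') =ᶠ[𝓝 t] deriv g := hev.deriv
    have h2 : ∀ᶠ r in 𝓝 t, deriv g r = Pt r := by
      filter_upwards [eventually_gt_nhds ht] with r hr
      exact (hgd r hr).deriv
    filter_upwards [h1, h2] with r hr1 hr2
    rw [hr1, hr2]
  -- second t derivative
  have hA : HasDerivAt (fun r => lam/(2*c) * (F1 (c^2*r^2 - x^2) * (2*c^2*r)) * Real.sinh (lam*r)
      - lam/(2*c) * F (c^2*r^2 - x^2) * (lam * Real.cosh (lam*r)))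
      ((lam/(2*c) * (F2 (c^2*t^2 - x^2) * (2*c^2*t) * (2*c^2*t) + F1 (c^2*t^2 - x^2) * (2*c^2))) * Real.sinh (lam*t)
        + lam/(2*c) * (F1 (c^2*t^2 - x^2) * (2*c^2*t)) * (lam * Real.cosh (lam*t))
        - (lam/(2*c) * (F1 (c^2*t^2 - x^2) * (2*c^2*t)) * (lam * Real.cosh (lam*t))
          + lam/(2*c) * F (c^2*t^2 - x^2) * (lam * (lam * Real.sinh (lam*t))))) t := by
    have hF1U : HasDerivAt (fun r => F1 (c^2*r^2 - x^2))
        (F2 (c^2*t^2 - x^2) * (2*c^2*t)) t := (hdF1 _).comp t (hU t)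
    have hlin : HasDerivAt (fun r : ℝ => 2*c^2*r) (2*c^2) t := by
      simpa using (hasDerivAt_id t).const_mul (2*c^2)
    have hterm1 : HasDerivAt (fun r => F1 (c^2*r^2 - x^2) * (2*c^2*r))
        (F2 (c^2*t^2 - x^2) * (2*c^2*t) * (2*c^2*t) + F1 (c^2*t^2 - x^2) * (2*c^2)) t := by
      exact hF1U.mul hlin
    have hcosh_d : HasDerivAt (fun r => lam * Real.cosh (lam*r)) (lam * (lam * Real.sinh (lam*t))) t := by
      have h := (Real.hasDerivAt_cosh (lam*t)).comp t ((hasDerivAt_id t).const_mul lam)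
      have h2 := h.const_mul lam
      refine h2.congr_deriv ?_; ring
    exact ((hterm1.const_mul (lam/(2*c))).mul (hsinh_d t)).sub ((hFU t).const_mul (lam/(2*c)) |>.mul hcosh_d)
  have hB : HasDerivAt (fun r => (Real.sinh (lam*r))^2)
      (2 * Real.sinh (lam*t) ^ 1 * (lam * Real.cosh (lam*t))) t := by
    have := (hsinh_d t).pow 2
    refine this.congr_deriv ?_
    norm_num
  have hSpos : 0 < Real.sinh (lam*t) := Real.sinh_pos_iff.2 (mul_pos hlam ht)
  have hS2 : (Real.sinh (lam*t))^2 ≠ 0 := by positivity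
  have hPt_deriv : HasDerivAt Pt
      (((lam/(2*c) * (F2 (c^2*t^2 - x^2) * (2*c^2*t) * (2*c^2*t) + F1 (c^2*t^2 - x^2) * (2*c^2)) * Real.sinh (lam*t) + lam/(2*c) * (F1 (c^2*t^2 - x^2) * (2*c^2*t)) * (lam * Real.cosh (lam*t)) - (lam/(2*c) * (F1 (c^2*t^2 - x^2) * (2*c^2*t)) * (lam * Real.cosh (lam*t)) + lam/(2*c) * F (c^2*t^2 - x^2) * (lam * (lam * Real.sinh (lam*t))))) * Real.sinh (lam*t) ^ 2 - (lam/(2*c) * (F1 (c^2*t^2 - x^2) * (2*c^2*t)) * Real.sinh (lam*t) - lam/(2*c) * F (c^2*t^2 - x^2) * (lam * Real.cosh (lam*t))) * (2 * Real.sinh (lam*t) ^ 1 * (lam * Real.cosh (lam*t)))) / (Real.sinh (lam*t) ^ 2) ^ 2) t := hA.div hB hS2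
  -- the x-direction
  have hopen_x : IsOpen {s : ℝ | s^2 < c^2*t^2} := isOpen_lt (continuous_id.pow 2) continuous_const
  have hmem_x : x ∈ {s : ℝ | s^2 < c^2*t^2} := hx2
  set g2 : ℝ → ℝ := fun s => lam/(2*c) * F (c^2*t^2 - s^2) / Real.sinh (lam*t) with hg2_def
  have hev2 : (fun s => p s t) =ᶠ[𝓝 x] g2 := by
    filter_upwards [hopen_x.mem_nhds hmem_x] with s hs
    exact hrep s t (le_of_lt hs)
  set Px : ℝ → ℝ := fun s => lam/(2*c) * (F1 (c^2*t^2 - s^2) * (-(2*s))) / Real.sinh (lam*t)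
    with hPx_def
  have hU2 : ∀ s : ℝ, HasDerivAt (fun s => c^2*t^2 - s^2) (-(2*s)) s := by
    intro s
    have h := (hasDerivAt_pow 2 s).const_sub (c^2*t^2)
    refine h.congr_deriv ?_
    push_cast; ring
  have hF1U2 : ∀ s : ℝ, HasDerivAt (fun s => F (c^2*t^2 - s^2))
      (F1 (c^2*t^2 - s^2) * (-(2*s))) s := fun s => (hdF _).comp s (hU2 s)
  have hg2d : ∀ s : ℝ, HasDerivAt g2 (Px s) s := by
    intro s
    exact ((hF1U2 s).const_mul (lam/(2*c))).div_const _
  have hder_ev2 : deriv (fun s' => p s' t) =ᶠ[𝓝 x] Px := by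
    have h1 : deriv (fun s' => p s' t) =ᶠ[𝓝 x] deriv g2 := hev2.deriv
    filter_upwards [h1] with s hs1
    rw [hs1, (hg2d s).deriv]
  have hPx_deriv : HasDerivAt Px
      (lam/(2*c) * (F2 (c^2*t^2 - x^2) * (-(2*x)) * (-(2*x)) + F1 (c^2*t^2 - x^2) * (-2))
        / Real.sinh (lam*t)) x := by
    have hterm : HasDerivAt (fun s => F1 (c^2*t^2 - s^2) * (-(2*s)))
        (F2 (c^2*t^2 - x^2) * (-(2*x)) * (-(2*x)) + F1 (c^2*t^2 - x^2) * (-2)) x := by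
      have hF2U : HasDerivAt (fun s => F1 (c^2*t^2 - s^2))
          (F2 (c^2*t^2 - x^2) * (-(2*x))) x := (hdF1 _).comp x (hU2 x)
      have hlin2 : HasDerivAt (fun s : ℝ => -(2*s)) (-2 : ℝ) x := by
        simpa [Pi.neg_def] using ((hasDerivAt_id x).const_mul (2:ℝ)).neg
      exact hF2U.mul hlin2
    exact (hterm.const_mul (lam/(2*c))).div_const _
  -- assemble
  rw [Filter.EventuallyEq.deriv_eq hder_ev, hPt_deriv.deriv]
  rw [Filter.EventuallyEq.deriv_eq hder_ev2, hPx_deriv.deriv]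
  rw [hder_ev.self_of_nhds]
  have hkey := ode_dc ha (c^2*t^2 - x^2)
  rw [ha_def] at hkey
  simp only [hPt_def]
  have hSne : Real.sinh (lam*t) ≠ 0 := ne_of_gt hSpos
  have hcne : (c:ℝ) ≠ 0 := ne_of_gt hc
  have hkey2 : 4*c^2*((c^2*t^2 - x^2) * F2 (c^2*t^2 - x^2) + F1 (c^2*t^2 - x^2))
      = lam^2 * F (c^2*t^2 - x^2) := by
    have hkey' : (c^2*t^2 - x^2) * F2 (c^2*t^2 - x^2) + F1 (c^2*t^2 - x^2)
        = lam^2/(4*c^2) * F (c^2*t^2 - x^2) := hkey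
    rw [hkey']
    field_simp
  field_simp
  linear_combination (Real.sinh (lam*t)^2) * hkey2

end CothTele

/-- `p(x,t) = (λ/(2c)) I₀((λ/c)√(c²t²-x²))/sinh(λt)` solves the telegraph
equation with rate `λ coth(λt)` and integrates to 1 on `(-ct, ct)`. -/
theorem coth_telegraph_density (c lam : ℝ) (hc : 0 < c) (hlam : 0 < lam)
    (p : ℝ → ℝ → ℝ)
    (hp : ∀ x t, p x t =
      lam / (2 * c) * besselI0 (lam / c * Real.sqrt (c ^ 2 * t ^ 2 - x ^ 2))
        / Real.sinh (lam * t)) :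
    (∀ x t : ℝ, 0 < t → |x| < c * t →
      deriv (fun r => deriv (fun r' => p x r') r) t
        + 2 * lam * (Real.cosh (lam * t) / Real.sinh (lam * t)) * deriv (fun r => p x r) t
        = c ^ 2 * deriv (fun s => deriv (fun s' => p s' t) s) x) ∧
    (∀ t : ℝ, 0 < t → ∫ x in Set.Ioo (-(c * t)) (c * t), p x t = 1) := by
  constructor
  · intro x t ht hx
    exact CothTele.pde_pointwise c lam hc hlam p hp x t ht hx
  · intro t ht
    have hSpos : 0 < Real.sinh (lam * t) := Real.sinh_pos_iff.2 (mul_pos hlam ht)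
    have hSne : Real.sinh (lam * t) ≠ 0 := ne_of_gt hSpos
    have hcne : c ≠ 0 := ne_of_gt hc
    have hlne : lam ≠ 0 := ne_of_gt hlam
    have hcongr : ∀ x ∈ Set.Ioo (-(c * t)) (c * t),
        p x t = lam / (2 * c) / Real.sinh (lam * t)
          * CothTele.PS (CothTele.dc (lam^2/(4*c^2))) (c^2*t^2 - x^2) := by
      intro x hx
      have hx2 : x^2 ≤ c^2*t^2 := by
        rcases hx with ⟨h1, h2⟩
        nlinarith
      rw [hp, CothTele.besselI0_eq c lam hc _ (by linarith)]
      ring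
    rw [MeasureTheory.setIntegral_congr_fun measurableSet_Ioo hcongr,
      MeasureTheory.integral_const_mul _ _, CothTele.integral_PS c lam t hc hlam ht]
    field_simp
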